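/- Let g be a Lie algebra over ℝ acting on a commutative ℝ-algebra C by derivations, i.e., there is a Lie algebra homomorphism X ↦ X_C from g into the Lie algebra of derivations of C. Then the C-module C ⊗_ℝ g of C-valued points (functions V : valued in g, modeled as C ⊗ g) carries a Lie bracket defined on elements V, W by [V, W] = V_C(W) − W_C(V) + [V, W]•, where for V = Σ fᵢ ⊗ Xᵢ the derivation V_C = Σ fᵢ (Xᵢ)_C acts componentwise on W, and [V,W]• is the C-bilinear extension of the bracket of g. This bracket is ℝ-bilinear, alternating, satisfies the Jacobi identity, and satisfies [V, fW] = f[V,W] + V_C(f)W for f ∈ C. -/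

import Mathlib

open TensorProduct

section ActionAux

variable {C g : Type*} [CommRing C] [Algebra ℝ C] [LieRing g] [LieAlgebra ℝ g]
  (ρ : g →ₗ[ℝ] Derivation ℝ C C)

noncomputable def actionAnchor : C ⊗[ℝ] g →ₗ[ℝ] Derivation ℝ C C :=
  TensorProduct.lift (LinearMap.mk₂ ℝ (fun f X => f • ρ X)
    (fun f f' X => by rw [add_smul])
    (fun r f X => by rw [smul_assoc])
    (fun f X Y => by rw [map_add, smul_add])
    (fun r f X => by rw [map_smul, smul_comm]))

@[simp] lemma actionAnchor_tmul (f : C) (X : g) :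
    actionAnchor ρ (f ⊗ₜ[ℝ] X) = f • ρ X := rfl

noncomputable def actionBrk : C ⊗[ℝ] g →ₗ[ℝ] C ⊗[ℝ] g →ₗ[ℝ] C ⊗[ℝ] g :=
  TensorProduct.lift (LinearMap.mk₂ ℝ
    (fun f X => TensorProduct.lift (LinearMap.mk₂ ℝ (fun k Y => (f * k) ⊗ₜ[ℝ] ⁅X, Y⁆)
      (fun k k' Y => by rw [mul_add, add_tmul])
      (fun r k Y => by rw [mul_smul_comm, smul_tmul'])
      (fun k Y Y' => by rw [lie_add, tmul_add])
      (fun r k Y => by rw [lie_smul, tmul_smul])))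
    (fun f f' X => by ext k Y; simp [add_mul, add_tmul])
    (fun r f X => by ext k Y; simp [smul_mul_assoc, smul_tmul'])
    (fun f X X' => by ext k Y; simp [add_lie, tmul_add])
    (fun r f X => by ext k Y; simp))

@[simp] lemma actionBrk_tmul (f k : C) (X Y : g) :
    actionBrk (f ⊗ₜ[ℝ] X) (k ⊗ₜ[ℝ] Y) = (f * k) ⊗ₜ[ℝ] ⁅X, Y⁆ := rfl

noncomputable def actionAct : C ⊗[ℝ] g →ₗ[ℝ] C ⊗[ℝ] g →ₗ[ℝ] C ⊗[ℝ] g where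
  toFun V := LinearMap.rTensor g (actionAnchor ρ V).toLinearMap
  map_add' V W := by ext k Y; simp [map_add]
  map_smul' r V := by ext k Y; simp

@[simp] lemma actionAct_tmul (f k : C) (X Y : g) :
    actionAct ρ (f ⊗ₜ[ℝ] X) (k ⊗ₜ[ℝ] Y) = (f * ρ X k) ⊗ₜ[ℝ] Y := by
  simp [actionAct, LinearMap.rTensor_tmul, smul_eq_mul]

noncomputable def actionB : C ⊗[ℝ] g →ₗ[ℝ] C ⊗[ℝ] g →ₗ[ℝ] C ⊗[ℝ] g :=
  actionBrk + actionAct ρ - (actionAct ρ).flip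

@[simp] lemma actionB_tmul (f k : C) (X Y : g) :
    actionB ρ (f ⊗ₜ[ℝ] X) (k ⊗ₜ[ℝ] Y)
      = (f * k) ⊗ₜ[ℝ] ⁅X, Y⁆ + (f * ρ X k) ⊗ₜ[ℝ] Y - (k * ρ Y f) ⊗ₜ[ℝ] X := by
  simp [actionB, LinearMap.sub_apply, LinearMap.add_apply]

noncomputable def actionAtom : g → C ⊗[ℝ] g := fun w => (1 : C) ⊗ₜ[ℝ] w

lemma action_tmul_eq_smul (c : C) (w : g) :
    c ⊗ₜ[ℝ] w = c • (actionAtom w : C ⊗[ℝ] g) := by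
  rw [actionAtom, smul_tmul', smul_eq_mul, mul_one]

lemma actionBrk_add_flip (V W : C ⊗[ℝ] g) : actionBrk V W + actionBrk W V = 0 := by
  have h : (actionBrk + (actionBrk (C := C) (g := g)).flip) = 0 := by
    ext f X k Y
    simp only [TensorProduct.AlgebraTensorModule.curry_apply, TensorProduct.curry_apply,
      LinearMap.coe_restrictScalars, LinearMap.add_apply, LinearMap.flip_apply,
      actionBrk_tmul, LinearMap.zero_apply]
    rw [mul_comm k f, ← lie_skew X Y, tmul_neg]
    abel
  simpa using congrArg (fun F : C ⊗[ℝ] g →ₗ[ℝ] C ⊗[ℝ] g →ₗ[ℝ] C ⊗[ℝ] g => F V W) h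

lemma actionBrk_self (V : C ⊗[ℝ] g) : actionBrk V V = 0 := by
  have h := actionBrk_add_flip V V
  have h2 : (2 : ℝ) • actionBrk V V = 0 := by rw [two_smul]; exact h
  have := congrArg (fun x => ((2 : ℝ)⁻¹) • x) h2
  simpa [smul_smul] using this

lemma actionB_self (V : C ⊗[ℝ] g) : actionB ρ V V = 0 := by
  simp [actionB, LinearMap.sub_apply, LinearMap.add_apply, actionBrk_self]

lemma actionB_jacobi_tmul (hρ : ∀ X Y : g, ρ ⁅X, Y⁆ = ⁅ρ X, ρ Y⁆)
    (f k l : C) (X Y Z : g) :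
    actionB ρ (f ⊗ₜ[ℝ] X) (actionB ρ (k ⊗ₜ[ℝ] Y) (l ⊗ₜ[ℝ] Z))
      = actionB ρ (actionB ρ (f ⊗ₜ[ℝ] X) (k ⊗ₜ[ℝ] Y)) (l ⊗ₜ[ℝ] Z)
        + actionB ρ (k ⊗ₜ[ℝ] Y) (actionB ρ (f ⊗ₜ[ℝ] X) (l ⊗ₜ[ℝ] Z)) := by
  simp only [map_add, map_sub, LinearMap.add_apply, LinearMap.sub_apply, actionB_tmul,
    Derivation.leibniz, smul_eq_mul, hρ, Derivation.commutator_apply, map_sub, map_add,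
    lie_lie, tmul_sub, tmul_add, sub_tmul, add_tmul, mul_sub, mul_add, sub_mul, add_mul]
  simp only [← lie_skew X Y, ← lie_skew X Z, ← lie_skew Y Z, tmul_neg]
  simp only [action_tmul_eq_smul]
  module

lemma actionB_jacobi (hρ : ∀ X Y : g, ρ ⁅X, Y⁆ = ⁅ρ X, ρ Y⁆)
    (U V W : C ⊗[ℝ] g) :
    actionB ρ U (actionB ρ V W)
      = actionB ρ (actionB ρ U V) W + actionB ρ V (actionB ρ U W) := by
  induction U using TensorProduct.induction_on with
  | zero => simp
  | add U₁ U₂ hU₁ hU₂ =>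
    simp only [map_add, LinearMap.add_apply, hU₁, hU₂]; abel
  | tmul f X =>
    induction V using TensorProduct.induction_on with
    | zero => simp
    | add V₁ V₂ hV₁ hV₂ =>
      simp only [map_add, LinearMap.add_apply, hV₁, hV₂]; abel
    | tmul k Y =>
      induction W using TensorProduct.induction_on with
      | zero => simp
      | add W₁ W₂ hW₁ hW₂ =>
        simp only [map_add, hW₁, hW₂]; abel
      | tmul l Z => exact actionB_jacobi_tmul ρ hρ f k l X Y Z

lemma actionB_leibniz (V W : C ⊗[ℝ] g) (f : C) :
    actionB ρ V (f • W) = f • actionB ρ V W + actionAnchor ρ V f • W := by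
  induction V using TensorProduct.induction_on with
  | zero => simp
  | add V₁ V₂ h₁ h₂ =>
    simp only [map_add, LinearMap.add_apply, h₁, h₂, Derivation.add_apply, add_smul, smul_add]
    abel
  | tmul h X =>
    induction W using TensorProduct.induction_on with
    | zero => simp
    | add W₁ W₂ h₁ h₂ =>
      simp only [smul_add, map_add, h₁, h₂]
      abel
    | tmul k Y =>
      rw [smul_tmul', smul_eq_mul]
      simp only [actionB_tmul, actionAnchor_tmul, Derivation.leibniz, smul_eq_mul,
        Derivation.coe_smul, Pi.smul_apply, smul_tmul', map_add, mul_add, mul_sub,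
        tmul_add, tmul_sub, smul_sub, smul_add]
      simp only [action_tmul_eq_smul]
      module

end ActionAux

/-- Given an action of a real Lie algebra `g` on a commutative `ℝ`-algebra `C` by
derivations, the `C`-module `C ⊗ g` carries the action bracket
`[f⊗X, k⊗Y] = fk ⊗ [X,Y] + f·X_C(k) ⊗ Y − k·Y_C(f) ⊗ X`, which is `ℝ`-bilinear,
alternating, satisfies the Jacobi identity, and the Leibniz rule with respect to the
anchor `a(f⊗X) = f • X_C`. -/
theorem stmt_10 {C g : Type*} [CommRing C] [Algebra ℝ C]
    [LieRing g] [LieAlgebra ℝ g]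
    (ρ : g →ₗ[ℝ] Derivation ℝ C C)
    (hρ : ∀ X Y : g, ρ ⁅X, Y⁆ = ⁅ρ X, ρ Y⁆) :
    ∃ (B : C ⊗[ℝ] g →ₗ[ℝ] C ⊗[ℝ] g →ₗ[ℝ] C ⊗[ℝ] g)
      (a : C ⊗[ℝ] g →ₗ[ℝ] Derivation ℝ C C),
      (∀ (f : C) (X : g), a (f ⊗ₜ[ℝ] X) = f • ρ X) ∧
      (∀ (f k : C) (X Y : g),
          B (f ⊗ₜ[ℝ] X) (k ⊗ₜ[ℝ] Y)
            = (f * k) ⊗ₜ[ℝ] ⁅X, Y⁆ + (f * ρ X k) ⊗ₜ[ℝ] Y - (k * ρ Y f) ⊗ₜ[ℝ] X) ∧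
      (∀ V : C ⊗[ℝ] g, B V V = 0) ∧
      (∀ U V W : C ⊗[ℝ] g, B U (B V W) = B (B U V) W + B V (B U W)) ∧
      (∀ (V W : C ⊗[ℝ] g) (f : C), B V (f • W) = f • B V W + a V f • W) := by
  exact ⟨actionB ρ, actionAnchor ρ,
    fun f X => actionAnchor_tmul ρ f X,
    fun f k X Y => actionB_tmul ρ f k X Y,
    actionB_self ρ,
    actionB_jacobi ρ hρ,
    actionB_leibniz ρ⟩
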